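/- Let r ≥ 4 be an even integer and A ∈ ℂ a primitive 4r-th root of unity, with [n] = (A^{2n} − A^{−2n})/(A² − A^{−2}). Then ∑_{n odd, 1 ≤ n ≤ r−1} [n]² = −r/(A² − A^{−2})² and ∑_{n even, 2 ≤ n ≤ r−2} [n]² = −r/(A² − A^{−2})². In particular the total sum ω² = ∑_{n=1}^{r−1}[n]² satisfies ω² = 2∑_{n odd}[n]² = 2∑_{n even}[n]². -/

import Mathlib

noncomputable def qint (A : ℂ) (n : ℕ) : ℂ :=
  (A ^ (2 * n) - A⁻¹ ^ (2 * n)) / (A ^ 2 - A⁻¹ ^ 2)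

lemma geom_zero' {x : ℂ} (hx : x ≠ 1) {m : ℕ} (hm : x ^ m = 1) :
    ∑ k ∈ Finset.range m, x ^ k = 0 := by
  rw [geom_sum_eq hx, hm, sub_self, zero_div]

lemma qint_sq (A : ℂ) (hA0 : A ≠ 0) (n : ℕ) :
    qint A n ^ 2 = (A ^ (4 * n) + A⁻¹ ^ (4 * n) - 2) / (A ^ 2 - A⁻¹ ^ 2) ^ 2 := by
  unfold qint
  rw [div_pow]
  congr 1
  have h : A ^ (2 * n) * A⁻¹ ^ (2 * n) = 1 := by
    rw [← mul_pow, mul_inv_cancel₀ hA0, one_pow]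
  have h4 : A ^ (4 * n) = (A ^ (2 * n)) ^ 2 := by
    rw [← pow_mul]; congr 1; ring
  have h4' : A⁻¹ ^ (4 * n) = (A⁻¹ ^ (2 * n)) ^ 2 := by
    rw [← pow_mul]; congr 1; ring
  rw [h4, h4']
  linear_combination (-2 : ℂ) * h

theorem stmt_1 (r : ℕ) (hr : 4 ≤ r) (hre : Even r) (A : ℂ)
    (hA : IsPrimitiveRoot A (4 * r)) :
    (∑ n ∈ (Finset.Icc 1 (r - 1)).filter (fun n => Odd n), (qint A n) ^ 2 =
        -(r : ℂ) / (A ^ 2 - A⁻¹ ^ 2) ^ 2) ∧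
    (∑ n ∈ (Finset.Icc 1 (r - 1)).filter (fun n => Even n), (qint A n) ^ 2 =
        -(r : ℂ) / (A ^ 2 - A⁻¹ ^ 2) ^ 2) ∧
    (∑ n ∈ Finset.Icc 1 (r - 1), (qint A n) ^ 2 =
        2 * ∑ n ∈ (Finset.Icc 1 (r - 1)).filter (fun n => Odd n), (qint A n) ^ 2) ∧
    (∑ n ∈ Finset.Icc 1 (r - 1), (qint A n) ^ 2 =
        2 * ∑ n ∈ (Finset.Icc 1 (r - 1)).filter (fun n => Even n), (qint A n) ^ 2) := by
  obtain ⟨t, ht⟩ := hre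
  have hA0 : A ≠ 0 := hA.ne_zero (by omega)
  have hApow : A ^ (4 * r) = 1 := hA.pow_eq_one
  have hA4 : A ^ 4 ≠ 1 := by
    intro h
    have h2 := hA.dvd_of_pow_eq_one 4 h
    have := Nat.le_of_dvd (by norm_num) h2
    omega
  have hA8 : A ^ 8 ≠ 1 := by
    intro h
    have h2 := hA.dvd_of_pow_eq_one 8 h
    have := Nat.le_of_dvd (by norm_num) h2
    omega
  set d : ℂ := A ^ 2 - A⁻¹ ^ 2 with hdef
  -- geometric sums
  have hA4r : (A ^ 4) ^ r = 1 := by rw [← pow_mul]; exact hApow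
  have geom4 : ∑ k ∈ Finset.range r, (A ^ 4) ^ k = 0 := geom_zero' hA4 hA4r
  have geom4' : ∑ k ∈ Finset.range r, (A⁻¹ ^ 4) ^ k = 0 := by
    refine geom_zero' ?_ ?_
    · rw [inv_pow, ne_eq, inv_eq_one]; exact hA4
    · rw [inv_pow, inv_pow, hA4r, inv_one]
  have hA8m : (A ^ 8) ^ (r / 2) = 1 := by
    rw [← pow_mul]
    have : 8 * (r / 2) = 4 * r := by omega
    rw [this, hApow]
  have geom8 : ∑ k ∈ Finset.range (r / 2), (A ^ 8) ^ k = 0 := geom_zero' hA8 hA8m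
  have geom8' : ∑ k ∈ Finset.range (r / 2), (A⁻¹ ^ 8) ^ k = 0 := by
    refine geom_zero' ?_ ?_
    · rw [inv_pow, ne_eq, inv_eq_one]; exact hA8
    · rw [inv_pow, inv_pow, hA8m, inv_one]
  -- odd sum
  have hOddIdx : (Finset.Icc 1 (r - 1)).filter (fun n => Odd n)
      = (Finset.range (r / 2)).image (fun k => 2 * k + 1) := by
    ext n
    simp only [Finset.mem_filter, Finset.mem_Icc, Finset.mem_image, Finset.mem_range,
      Nat.odd_iff]
    constructor
    · rintro ⟨⟨h1, h2⟩, h3⟩; exact ⟨n / 2, by omega, by omega⟩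
    · rintro ⟨k, hk, rfl⟩; omega
  have hOdd : ∑ n ∈ (Finset.Icc 1 (r - 1)).filter (fun n => Odd n), (qint A n) ^ 2
      = -(r : ℂ) / d ^ 2 := by
    rw [hOddIdx, Finset.sum_image (by intro a _ b _ h; have h' : 2 * a + 1 = 2 * b + 1 := h; omega)]
    simp only [qint_sq A hA0]
    rw [← Finset.sum_div]
    congr 1
    have e1 : ∀ k : ℕ, A ^ (4 * (2 * k + 1)) = A ^ 4 * (A ^ 8) ^ k := by
      intro k; rw [← pow_mul, ← pow_add]; congr 1; ring
    have e2 : ∀ k : ℕ, A⁻¹ ^ (4 * (2 * k + 1)) = A⁻¹ ^ 4 * (A⁻¹ ^ 8) ^ k := by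
      intro k; rw [← pow_mul, ← pow_add]; congr 1; ring
    simp only [e1, e2]
    rw [Finset.sum_sub_distrib, Finset.sum_add_distrib, ← Finset.mul_sum, ← Finset.mul_sum,
      geom8, geom8', mul_zero, mul_zero, Finset.sum_const, Finset.card_range]
    have h2 : r / 2 = t := by omega
    rw [h2]
    have : (r : ℂ) = 2 * (t : ℂ) := by
      have : (r : ℕ) = 2 * t := by omega
      rw [this]; push_cast; ring
    rw [this]
    simp [nsmul_eq_mul]
    ring
  -- total sum
  have hIccErase : Finset.Icc 1 (r - 1) = (Finset.range r).erase 0 := by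
    ext n
    simp only [Finset.mem_Icc, Finset.mem_erase, Finset.mem_range]
    omega
  have hq0 : qint A 0 ^ 2 = 0 := by simp [qint]
  have hTot : ∑ n ∈ Finset.Icc 1 (r - 1), (qint A n) ^ 2 = -2 * (r : ℂ) / d ^ 2 := by
    rw [hIccErase, Finset.sum_erase (f := fun n => qint A n ^ 2) (Finset.range r) hq0]
    simp only [qint_sq A hA0]
    rw [← Finset.sum_div]
    congr 1
    have e1 : ∀ n : ℕ, A ^ (4 * n) = (A ^ 4) ^ n := by
      intro n; rw [← pow_mul]
    have e2 : ∀ n : ℕ, A⁻¹ ^ (4 * n) = (A⁻¹ ^ 4) ^ n := by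
      intro n; rw [← pow_mul]
    simp only [e1, e2]
    rw [Finset.sum_sub_distrib, Finset.sum_add_distrib, geom4, geom4',
      Finset.sum_const, Finset.card_range]
    simp [nsmul_eq_mul]
    ring
  -- split
  have hsplit : ∑ n ∈ Finset.Icc 1 (r - 1), (qint A n) ^ 2
      = (∑ n ∈ (Finset.Icc 1 (r - 1)).filter (fun n => Odd n), (qint A n) ^ 2)
      + (∑ n ∈ (Finset.Icc 1 (r - 1)).filter (fun n => Even n), (qint A n) ^ 2) := by
    rw [← Finset.sum_filter_add_sum_filter_not (Finset.Icc 1 (r - 1)) (fun n => Odd n)]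
    congr 1
    apply Finset.sum_congr _ (fun _ _ => rfl)
    apply Finset.filter_congr
    intro x _
    simp [Nat.not_odd_iff_even]
  have hEven : ∑ n ∈ (Finset.Icc 1 (r - 1)).filter (fun n => Even n), (qint A n) ^ 2
      = -(r : ℂ) / d ^ 2 := by
    rw [hTot, hOdd] at hsplit
    linear_combination -hsplit
  refine ⟨hOdd, hEven, ?_, ?_⟩
  · rw [hTot, hOdd]; ring
  · rw [hTot, hEven]; ring
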